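/- For all s₁, s₂ ≥ 0 and all u ≥ 1/2, one has ∫_{s₂}^∞ ∫_{s₁}^∞ e^{x}·Ai(x+y+u²)²·e^{-2(x+y)u − 4u³/3} dy dx ≤ (1/(8u³))·e^{-8u³/3}·e^{-4(s₁+s₂)u + s₂}; i.e., the Hilbert–Schmidt norm of the weighted kernel K̄_{2,1}(x,y) = e^{x/2}·1_{x>s₂}1_{y>s₁}·Ai(x+y+u²)e^{-(x+y)u − 2u³/3} is at most (8u³)^{-1/2}·e^{-4u³/3}·e^{-2(s₁+s₂)u + s₂/2}. -/

import Mathlib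

set_option maxHeartbeats 1000000

open MeasureTheory Real Filter Complex Topology

/-- The Airy function, defined for `x ∈ ℝ` by the convergent improper integral
`Ai(x) = (1/π) lim_{T→∞} ∫₀ᵀ cos(t³/3 + x t) dt`. -/
noncomputable def Ai (x : ℝ) : ℝ :=
  limUnder Filter.atTop
    (fun T : ℝ => (1 / Real.pi) * ∫ t in (0 : ℝ)..T, Real.cos (t ^ 3 / 3 + x * t))

/-- The Hilbert–Schmidt norm `(∫∫ K(x,y)² dx dy)^{1/2}` of a kernel on `ℝ²`. -/
noncomputable def HSnorm (K : ℝ → ℝ → ℝ) : ℝ :=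
  Real.sqrt (∫⁻ p : ℝ × ℝ, ENNReal.ofReal (K p.1 p.2 ^ 2)).toReal

noncomputable def Fz (x : ℝ) (z : ℂ) : ℂ := Complex.exp (Complex.I * (z^3/3 + x*z))

lemma diff_Fz (x : ℝ) : Differentiable ℂ (Fz x) := by
  unfold Fz; fun_prop

lemma cont_Fz (x : ℝ) : Continuous (Fz x) := (diff_Fz x).continuous

lemma norm_Fz (x a b : ℝ) : ‖Fz x ((a:ℂ) + b*Complex.I)‖ = Real.exp (-a^2*b + b^3/3 - x*b) := by
  rw [Fz, Complex.norm_exp]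
  congr 1
  simp [Complex.mul_re, Complex.mul_im, Complex.div_re, Complex.div_im, pow_succ]
  ring

lemma rect_Fz (x T u : ℝ) :
    (∫ t in -T..T, Fz x t) = (∫ t in -T..T, Fz x ((t:ℂ) + u*Complex.I))
      - Complex.I • (∫ y in (0:ℝ)..u, Fz x ((T:ℂ) + y*Complex.I))
      + Complex.I • (∫ y in (0:ℝ)..u, Fz x ((-T:ℂ) + y*Complex.I)) := by
  have h := Complex.integral_boundary_rect_eq_zero_of_differentiableOn (Fz x)
    (⟨-T, 0⟩ : ℂ) (⟨T, u⟩ : ℂ) ((diff_Fz x).differentiableOn)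
  simp only [Complex.ofReal_zero, zero_mul, add_zero] at h
  push_cast at h ⊢
  linear_combination h

lemma int_top (x u : ℝ) (hu : 0 < u) :
    Integrable (fun t : ℝ => Fz x ((t:ℂ) + u*Complex.I)) := by
  have ae_meas : AEStronglyMeasurable (fun t : ℝ => Fz x ((t:ℂ) + u*Complex.I)) volume :=
    ((cont_Fz x).comp (by continuity)).aestronglyMeasurable
  apply Integrable.mono' (g := fun t : ℝ => Real.exp (u^3/3 - x*u) * Real.exp (-u * t^2))
    ((integrable_exp_neg_mul_sq hu).const_mul _)
    (ae_meas)
  filter_upwards with t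
  rw [norm_Fz, ← Real.exp_add]
  apply le_of_eq
  congr 1
  ring

lemma vert_bound (x u : ℝ) (hu : 0 ≤ u) {T : ℝ} (hT : 1 ≤ T) (a : ℝ) (ha : a^2 = T^2) :
    ‖∫ y in (0:ℝ)..u, Fz x ((a:ℂ) + y*Complex.I)‖ ≤ Real.exp (u^3/3 + (|x|) * u) / T^2 := by
  have hT0 : (0:ℝ) < T^2 := by positivity
  calc ‖∫ y in (0:ℝ)..u, Fz x ((a:ℂ) + y*Complex.I)‖
      ≤ ∫ y in (0:ℝ)..u, ‖Fz x ((a:ℂ) + y*Complex.I)‖ :=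
        intervalIntegral.norm_integral_le_integral_norm hu
    _ ≤ ∫ y in (0:ℝ)..u, Real.exp (u^3/3 + (|x|) * u) * Real.exp (-T^2 * y) := by
        apply intervalIntegral.integral_mono_on hu
        · apply Continuous.intervalIntegrable
          exact (cont_Fz x).comp (by continuity) |>.norm
        · apply Continuous.intervalIntegrable; continuity
        · intro y hy
          obtain ⟨hy0, hyu⟩ := hy
          rw [norm_Fz, ← Real.exp_add]
          apply Real.exp_le_exp.2
          have h1 : y^3/3 ≤ u^3/3 := by
            have := pow_le_pow_left₀ hy0 hyu 3
            linarith
          have h2 : -x*y ≤ (|x|) * u := by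
            calc -x*y ≤ (|x|) * y := by nlinarith [neg_abs_le x, abs_nonneg x]
            _ ≤ (|x|) * u := by nlinarith [abs_nonneg x]
          nlinarith [sq_nonneg a]
    _ = Real.exp (u^3/3 + (|x|) * u) * ((1 - Real.exp (-T^2 * u))/T^2) := by
        rw [intervalIntegral.integral_const_mul]
        congr 1
        have : ∀ y ∈ Set.uIcc (0:ℝ) u, HasDerivAt (fun y => -Real.exp (-T^2*y)/T^2)
            (Real.exp (-T^2 * y)) y := by
          intro y _
          have := ((hasDerivAt_id y).const_mul (-T^2)).exp
          have h' := this.neg.div_const (T^2)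
          convert h' using 1
          · rfl
          · rfl
          · rfl
          simp only [id]
          field_simp
        rw [intervalIntegral.integral_eq_sub_of_hasDerivAt this
          (by apply Continuous.intervalIntegrable; continuity)]
        field_simp
        rw [mul_zero, neg_zero, Real.exp_zero]; ring
    _ ≤ Real.exp (u^3/3 + (|x|) * u) * (1/T^2) := by
        apply mul_le_mul_of_nonneg_left _ (Real.exp_nonneg _)
        exact (div_le_div_iff_of_pos_right hT0).2 (by linarith [Real.exp_pos (-T^2 * u)])
    _ = Real.exp (u^3/3 + (|x|) * u) / T^2 := by ring

lemma Ai_eq (x u : ℝ) (hu : 0 < u) :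
    Ai x = (1/(2*Real.pi)) * (∫ t : ℝ, Fz x ((t:ℂ) + u*Complex.I)).re := by
  set L : ℂ := ∫ t : ℝ, Fz x ((t:ℂ) + u*Complex.I) with hL
  -- bottom integral tends to L
  have htop : Tendsto (fun T : ℝ => ∫ t in -T..T, Fz x ((t:ℂ) + u*Complex.I)) atTop (𝓝 L) :=
    intervalIntegral_tendsto_integral (int_top x u hu)
      (tendsto_neg_atTop_atBot) tendsto_id
  have hvert : ∀ c : ℝ → ℝ, (∀ T, (c T)^2 = T^2) →
      Tendsto (fun T : ℝ => Complex.I • (∫ y in (0:ℝ)..u, Fz x ((c T:ℂ) + y*Complex.I)))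
        atTop (𝓝 0) := by
    intro c hc
    have hb : ∀ᶠ T in (atTop : Filter ℝ),
        ‖Complex.I • (∫ y in (0:ℝ)..u, Fz x ((c T:ℂ) + y*Complex.I))‖
          ≤ Real.exp (u^3/3 + (|x|) * u) / T^2 := by
      filter_upwards [eventually_ge_atTop (1:ℝ)] with T hT
      rw [norm_smul, Complex.norm_I, one_mul]
      exact vert_bound x u hu.le hT (c T) (hc T)
    have hg : Tendsto (fun T : ℝ => Real.exp (u^3/3 + (|x|) * u) / T^2) atTop (𝓝 0) :=
      Tendsto.div_atTop tendsto_const_nhds (tendsto_pow_atTop (by norm_num))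
    exact squeeze_zero_norm' hb hg
  have hbot : Tendsto (fun T : ℝ => ∫ t in -T..T, Fz x t) atTop (𝓝 L) := by
    have := ((htop.sub (hvert (fun T => T) (fun T => rfl))).add
      (hvert (fun T => -T) (fun T => by ring)))
    simp only [sub_zero, add_zero] at this
    apply this.congr
    intro T
    push_cast
    exact (rect_Fz x T u).symm
  -- relate to cosine integral
  have hre : ∀ T : ℝ, (∫ t in (0:ℝ)..T, Real.cos (t ^ 3 / 3 + x * t))
      = (1/2) * (∫ t in -T..T, Fz x t).re := by
    intro T
    have hcont : Continuous (fun t : ℝ => Real.cos (t ^ 3 / 3 + x * t)) := by fun_prop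
    have heven : ∀ T' : ℝ, (∫ t in -T'..T', Real.cos (t ^ 3 / 3 + x * t))
        = 2 * ∫ t in (0:ℝ)..T', Real.cos (t ^ 3 / 3 + x * t) := by
      intro T'
      have h1 : (∫ t in -T'..(0:ℝ), Real.cos (t ^ 3 / 3 + x * t))
          + ∫ t in (0:ℝ)..T', Real.cos (t ^ 3 / 3 + x * t)
          = ∫ t in -T'..T', Real.cos (t ^ 3 / 3 + x * t) :=
        intervalIntegral.integral_add_adjacent_intervals
          (hcont.intervalIntegrable _ _) (hcont.intervalIntegrable _ _)
      have h2 : (∫ t in -T'..(0:ℝ), Real.cos (t ^ 3 / 3 + x * t))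
          = ∫ t in (0:ℝ)..T', Real.cos (t ^ 3 / 3 + x * t) := by
        have h := intervalIntegral.integral_comp_neg (a := (0:ℝ)) (b := T')
          (fun t => Real.cos (t ^ 3 / 3 + x * t))
        simp only [neg_zero] at h
        rw [← h]
        apply intervalIntegral.integral_congr
        intro t _
        simp only
        rw [show (-t) ^ 3 / 3 + x * (-t) = -(t ^ 3 / 3 + x * t) by ring, Real.cos_neg]
      linarith
    have h3 : (∫ t in -T..T, Fz x t).re = ∫ t in -T..T, Real.cos (t ^ 3 / 3 + x * t) := by
      have : ∀ t : ℝ, Real.cos (t ^ 3 / 3 + x * t) = Complex.reCLM (Fz x t) := by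
        intro t
        have : Fz x (t : ℂ) = Complex.exp ((t ^ 3 / 3 + x * t : ℝ) * Complex.I) := by
          unfold Fz
          congr 1
          push_cast
          ring
        rw [show (Complex.reCLM (Fz x t) : ℝ) = (Fz x (t:ℂ)).re from rfl, this,
          Complex.exp_ofReal_mul_I_re]
      have hint : IntervalIntegrable (fun t : ℝ => Fz x (t:ℂ)) volume (-T) T :=
        ((cont_Fz x).comp Complex.continuous_ofReal).intervalIntegrable _ _
      rw [intervalIntegral.integral_congr (g := fun t : ℝ => Complex.reCLM (Fz x t))
        (fun t _ => this t)]
      rw [ContinuousLinearMap.intervalIntegral_comp_comm _ hint]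
      rfl
    rw [h3, heven]
    ring
  have hmain : Tendsto (fun T : ℝ => (1 / Real.pi) * ∫ t in (0:ℝ)..T,
      Real.cos (t ^ 3 / 3 + x * t)) atTop (𝓝 ((1/(2*Real.pi)) * L.re)) := by
    have : Tendsto (fun T : ℝ => (1/(2*Real.pi)) * (∫ t in -T..T, Fz x t).re) atTop
        (𝓝 ((1/(2*Real.pi)) * L.re)) :=
      (Complex.continuous_re.tendsto L |>.comp hbot).const_mul _
    apply this.congr
    intro T
    rw [hre]
    ring
  exact hmain.limUnder_eq

lemma Ai_le (x u : ℝ) (hu : 0 < u) :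
    |Ai x| ≤ Real.exp (u^3/3 - x*u) / (2 * Real.sqrt (Real.pi * u)) := by
  have hπ : (0:ℝ) < Real.pi := Real.pi_pos
  rw [Ai_eq x u hu]
  have h1 : ‖(∫ t : ℝ, Fz x ((t:ℂ) + u*Complex.I))‖
      ≤ Real.exp (u^3/3 - x*u) * Real.sqrt (Real.pi / u) := by
    calc ‖(∫ t : ℝ, Fz x ((t:ℂ) + u*Complex.I))‖
        ≤ ∫ t : ℝ, ‖Fz x ((t:ℂ) + u*Complex.I)‖ := norm_integral_le_integral_norm _
      _ = ∫ t : ℝ, Real.exp (u^3/3 - x*u) * Real.exp (-u * t^2) := by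
          congr 1
          ext t
          rw [norm_Fz, ← Real.exp_add]
          congr 1
          ring
      _ = Real.exp (u^3/3 - x*u) * Real.sqrt (Real.pi / u) := by
          rw [MeasureTheory.integral_const_mul, integral_gaussian]
  have h2 : |(1/(2*Real.pi)) * (∫ t : ℝ, Fz x ((t:ℂ) + u*Complex.I)).re|
      ≤ (1/(2*Real.pi)) * ‖(∫ t : ℝ, Fz x ((t:ℂ) + u*Complex.I))‖ := by
    rw [abs_mul]
    gcongr
    · rw [abs_of_pos (by positivity)]
    · exact Complex.abs_re_le_norm _
  refine h2.trans ?_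
  refine (mul_le_mul_of_nonneg_left h1 (by positivity)).trans ?_
  apply le_of_eq
  have hsπ : Real.sqrt Real.pi * Real.sqrt Real.pi = Real.pi := Real.mul_self_sqrt hπ.le
  have hsu : (0:ℝ) < Real.sqrt u := Real.sqrt_pos.2 hu
  have hsπ0 : (0:ℝ) < Real.sqrt Real.pi := Real.sqrt_pos.2 hπ
  set E := Real.exp (u^3/3 - x*u) with hE
  rw [Real.sqrt_div hπ.le, Real.sqrt_mul hπ.le]
  rw [eq_div_iff (by positivity)]
  field_simp
  linear_combination E * hsπ


lemma lint_exp_Ioi (a c : ℝ) (hc : 0 < c) :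
    ∫⁻ y in Set.Ioi a, ENNReal.ofReal (Real.exp (-c * y))
      = ENNReal.ofReal (Real.exp (-c*a)/c) := by
  rw [← ofReal_integral_eq_lintegral_ofReal (exp_neg_integrableOn_Ioi a hc)
    (Filter.Eventually.of_forall fun y => (Real.exp_pos _).le)]
  congr 1
  have hderiv : ∀ y ∈ Set.Ioi a, HasDerivAt (fun y => -Real.exp (-c*y)/c)
      (Real.exp (-c * y)) y := by
    intro y _
    have h := (((hasDerivAt_id y).const_mul (-c)).exp.neg.div_const c)
    convert h using 1
    · rfl
    · rfl
    · rfl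
    simp only [id]
    field_simp
  have hcont : ContinuousWithinAt (fun y => -Real.exp (-c*y)/c) (Set.Ici a) a := by
    apply Continuous.continuousWithinAt; continuity
  have htend : Tendsto (fun y => -Real.exp (-c*y)/c) atTop (𝓝 0) := by
    have : Tendsto (fun y : ℝ => Real.exp (-c*y)) atTop (𝓝 0) :=
      Real.tendsto_exp_atBot.comp (tendsto_id.const_mul_atTop_of_neg (by linarith))
    have := (this.neg.div_const c)
    simpa using this
  rw [MeasureTheory.integral_Ioi_of_hasDerivAt_of_tendsto hcont hderiv
    (exp_neg_integrableOn_Ioi a hc) htend]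
  field_simp
  ring

lemma pointwise_bound (u x y : ℝ) (hu : 1/2 ≤ u) :
    Real.exp x * Ai (x+y+u^2)^2 * Real.exp (-2*(x+y)*u - 4*u^3/3)
      ≤ 1/(4*Real.pi*u) * Real.exp (-8*u^3/3)
        * (Real.exp ((1-4*u)*x) * Real.exp (-(4*u)*y)) := by
  have hu0 : (0:ℝ) < u := by linarith
  have hπ : (0:ℝ) < Real.pi := Real.pi_pos
  have h := Ai_le (x+y+u^2) u hu0
  have h2 : Ai (x+y+u^2)^2 ≤ Real.exp (-4*u^3/3 - 2*(x+y)*u) / (4*Real.pi*u) := by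
    have hs : Real.sqrt (Real.pi*u) ^ 2 = Real.pi * u := Real.sq_sqrt (by positivity)
    have := pow_le_pow_left₀ (abs_nonneg _) h 2
    rw [_root_.sq_abs, div_pow, ← Real.exp_nat_mul] at this
    refine this.trans (le_of_eq ?_)
    have e1 : ((2:ℕ):ℝ) * (u^3/3 - (x+y+u^2)*u) = -4*u^3/3 - 2*(x+y)*u := by
      push_cast; ring
    rw [mul_pow, hs, e1]
    congr 1
    ring
  calc Real.exp x * Ai (x+y+u^2)^2 * Real.exp (-2*(x+y)*u - 4*u^3/3)
      ≤ Real.exp x * (Real.exp (-4*u^3/3 - 2*(x+y)*u) / (4*Real.pi*u))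
        * Real.exp (-2*(x+y)*u - 4*u^3/3) := by
        apply mul_le_mul_of_nonneg_right _ (Real.exp_nonneg _)
        exact mul_le_mul_of_nonneg_left h2 (Real.exp_nonneg _)
    _ = 1/(4*Real.pi*u) * Real.exp (-8*u^3/3)
        * (Real.exp ((1-4*u)*x) * Real.exp (-(4*u)*y)) := by
        have hcollect : Real.exp x * Real.exp (-4*u^3/3 - 2*(x+y)*u)
            * Real.exp (-2*(x+y)*u - 4*u^3/3)
            = Real.exp (-8*u^3/3) * (Real.exp ((1-4*u)*x) * Real.exp (-(4*u)*y)) := by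
          rw [← Real.exp_add, ← Real.exp_add, ← Real.exp_add, ← Real.exp_add]
          congr 1
          ring
        linear_combination (1/(4*Real.pi*u)) * hcollect

lemma core_calc (s₁ s₂ u : ℝ) (hu : 1/2 ≤ u) :
    (∫⁻ x in Set.Ioi s₂, ∫⁻ y in Set.Ioi s₁,
        ENNReal.ofReal (1/(4*Real.pi*u) * Real.exp (-8*u^3/3)
          * (Real.exp ((1-4*u)*x) * Real.exp (-(4*u)*y))))
      ≤ ENNReal.ofReal (1 / (8 * u ^ 3) * Real.exp (-8 * u ^ 3 / 3) *
        Real.exp (-4 * (s₁ + s₂) * u + s₂)) := by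
  have hu0 : (0:ℝ) < u := by linarith
  have hπ : (0:ℝ) < Real.pi := Real.pi_pos
  have h41 : (0:ℝ) < 4*u - 1 := by linarith
  set C : ℝ := 1/(4*Real.pi*u) * Real.exp (-8*u^3/3) with hC
  have hC0 : 0 ≤ C := by positivity
  have step1 : ∀ x : ℝ, (∫⁻ y in Set.Ioi s₁,
      ENNReal.ofReal (C * (Real.exp ((1-4*u)*x) * Real.exp (-(4*u)*y))))
      = ENNReal.ofReal (C * Real.exp ((1-4*u)*x)) * ENNReal.ofReal (Real.exp (-(4*u)*s₁)/(4*u)) := by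
    intro x
    have : ∀ y : ℝ, ENNReal.ofReal (C * (Real.exp ((1-4*u)*x) * Real.exp (-(4*u)*y)))
        = ENNReal.ofReal (C * Real.exp ((1-4*u)*x)) * ENNReal.ofReal (Real.exp (-(4*u)*y)) := by
      intro y
      rw [← ENNReal.ofReal_mul (by positivity)]
      congr 1
      ring
    simp_rw [this]
    rw [lintegral_const_mul' _ _ ENNReal.ofReal_ne_top, lint_exp_Ioi s₁ (4*u) (by linarith)]
  simp_rw [step1]
  rw [lintegral_mul_const' _ _ ENNReal.ofReal_ne_top]
  have step2 : (∫⁻ x in Set.Ioi s₂, ENNReal.ofReal (C * Real.exp ((1-4*u)*x)))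
      = ENNReal.ofReal C * ENNReal.ofReal (Real.exp (-(4*u-1)*s₂)/(4*u-1)) := by
    have : ∀ x : ℝ, ENNReal.ofReal (C * Real.exp ((1-4*u)*x))
        = ENNReal.ofReal C * ENNReal.ofReal (Real.exp (-(4*u-1)*x)) := by
      intro x
      rw [← ENNReal.ofReal_mul hC0]
      congr 2
      ring_nf
    simp_rw [this]
    rw [lintegral_const_mul' _ _ ENNReal.ofReal_ne_top, lint_exp_Ioi s₂ (4*u-1) h41]
  rw [step2]
  rw [← ENNReal.ofReal_mul hC0, ← ENNReal.ofReal_mul (by positivity)]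
  apply ENNReal.ofReal_le_ofReal
  -- real inequality
  have hE : Real.exp (-(4*u-1)*s₂) * Real.exp (-(4*u)*s₁)
      = Real.exp (-4*(s₁+s₂)*u + s₂) := by
    rw [← Real.exp_add]; congr 1; ring
  have hπ3 : (3:ℝ) < Real.pi := Real.pi_gt_three
  have lhs_eq : C * (Real.exp (-(4*u-1)*s₂)/(4*u-1)) * (Real.exp (-(4*u)*s₁)/(4*u))
      = Real.exp (-8*u^3/3) * Real.exp (-4*(s₁+s₂)*u + s₂) / (16*Real.pi*u^2*(4*u-1)) := by
    rw [hC, ← hE]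
    field_simp
    ring
  rw [lhs_eq]
  rw [div_le_iff₀ (by positivity)]
  have hkey : 8*u^3 ≤ 16*Real.pi*u^2*(4*u-1) := by
    have hin : (0:ℝ) ≤ 64*Real.pi*u - 16*Real.pi - 8*u := by nlinarith [hπ3, hu, h41]
    have h1 : (0:ℝ) ≤ u^2 * (64*Real.pi*u - 16*Real.pi - 8*u) := mul_nonneg (sq_nonneg u) hin
    nlinarith [h1]
  have e1 : (0:ℝ) < Real.exp (-8*u^3/3) * Real.exp (-4*(s₁+s₂)*u + s₂) := by positivity
  calc Real.exp (-8*u^3/3) * Real.exp (-4*(s₁+s₂)*u + s₂)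
      = (Real.exp (-8*u^3/3) * Real.exp (-4*(s₁+s₂)*u + s₂)) * (8*u^3) * (1/(8*u^3)) := by
        field_simp
    _ ≤ (Real.exp (-8*u^3/3) * Real.exp (-4*(s₁+s₂)*u + s₂)) * (16*Real.pi*u^2*(4*u-1)) * (1/(8*u^3)) := by
        apply mul_le_mul_of_nonneg_right _ (by positivity)
        exact mul_le_mul_of_nonneg_left hkey e1.le
    _ = 1 / (8 * u ^ 3) * Real.exp (-8 * u ^ 3 / 3) * Real.exp (-4 * (s₁ + s₂) * u + s₂)
        * (16*Real.pi*u^2*(4*u-1)) := by ring_nf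



/-- bound in the proof of Lemma 3.11: for `s₁, s₂ ≥ 0` and
`u ≥ 1/2`, `∫_{s₂}^∞∫_{s₁}^∞ e^x Ai(x+y+u²)² e^{-2(x+y)u − 4u³/3}
≤ (8u³)^{-1} e^{-8u³/3} e^{-4(s₁+s₂)u + s₂}`; i.e. the Hilbert–Schmidt norm of
`K̄_{2,1}(x,y) = e^{x/2} 1_{x>s₂}1_{y>s₁} Ai(x+y+u²) e^{-(x+y)u − 2u³/3}` is at most
`(8u³)^{-1/2} e^{-4u³/3} e^{-2(s₁+s₂)u + s₂/2}`. -/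
theorem K21_weighted_HS_bound (s₁ s₂ u : ℝ) (hs₁ : 0 ≤ s₁) (hs₂ : 0 ≤ s₂)
    (hu : 1 / 2 ≤ u) :
    (∫⁻ x in Set.Ioi s₂, ∫⁻ y in Set.Ioi s₁,
        ENNReal.ofReal (Real.exp x * Ai (x + y + u ^ 2) ^ 2 *
          Real.exp (-2 * (x + y) * u - 4 * u ^ 3 / 3))) ≤
      ENNReal.ofReal (1 / (8 * u ^ 3) * Real.exp (-8 * u ^ 3 / 3) *
        Real.exp (-4 * (s₁ + s₂) * u + s₂)) ∧
    HSnorm (fun x y => Real.exp (x / 2) * (if s₂ < x ∧ s₁ < y then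
        Ai (x + y + u ^ 2) * Real.exp (-(x + y) * u - 2 * u ^ 3 / 3) else 0)) ≤
      1 / Real.sqrt (8 * u ^ 3) * Real.exp (-4 * u ^ 3 / 3) *
        Real.exp (-2 * (s₁ + s₂) * u + s₂ / 2) := by
  have hu0 : (0:ℝ) < u := by linarith
  have hπ : (0:ℝ) < Real.pi := Real.pi_pos
  have hptbd : ∀ x y : ℝ, Real.exp x * Ai (x + y + u ^ 2) ^ 2 *
      Real.exp (-2 * (x + y) * u - 4 * u ^ 3 / 3)
      ≤ 1/(4*Real.pi*u) * Real.exp (-8*u^3/3)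
        * (Real.exp ((1-4*u)*x) * Real.exp (-(4*u)*y)) := by
    intro x y
    have := pointwise_bound u x y hu
    convert this using 3 <;> ring
  have part1 : (∫⁻ x in Set.Ioi s₂, ∫⁻ y in Set.Ioi s₁,
      ENNReal.ofReal (Real.exp x * Ai (x + y + u ^ 2) ^ 2 *
        Real.exp (-2 * (x + y) * u - 4 * u ^ 3 / 3))) ≤
      ENNReal.ofReal (1 / (8 * u ^ 3) * Real.exp (-8 * u ^ 3 / 3) *
        Real.exp (-4 * (s₁ + s₂) * u + s₂)) := by
    refine le_trans ?_ (core_calc s₁ s₂ u hu)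
    apply lintegral_mono
    intro x
    apply lintegral_mono
    intro y
    exact ENNReal.ofReal_le_ofReal (hptbd x y)
  refine ⟨part1, ?_⟩
  set R1 : ℝ := 1 / (8 * u ^ 3) * Real.exp (-8 * u ^ 3 / 3) *
    Real.exp (-4 * (s₁ + s₂) * u + s₂) with hR1def
  have hR1 : 0 ≤ R1 := by positivity
  set R2 : ℝ := 1 / Real.sqrt (8 * u ^ 3) * Real.exp (-4 * u ^ 3 / 3) *
    Real.exp (-2 * (s₁ + s₂) * u + s₂ / 2) with hR2def
  have hR2 : 0 ≤ R2 := by positivity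
  have hexp2 : ∀ a : ℝ, Real.exp a ^ 2 = Real.exp (2*a) := by
    intro a
    rw [← Real.exp_nat_mul]
    norm_num
  have hsq : R2 ^ 2 = R1 := by
    have h8 : (0:ℝ) < 8*u^3 := by positivity
    rw [hR2def, hR1def, mul_pow, mul_pow, div_pow, one_pow, Real.sq_sqrt h8.le,
      hexp2, hexp2,
      show (2:ℝ)*(-4*u^3/3) = -8*u^3/3 by ring,
      show 2*(-2*(s₁+s₂)*u + s₂/2) = -4*(s₁+s₂)*u + s₂ by ring]
  set C : ℝ := 1/(4*Real.pi*u) * Real.exp (-8*u^3/3) with hCdef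
  set K : ℝ → ℝ → ℝ := fun x y => Real.exp (x / 2) * (if s₂ < x ∧ s₁ < y then
      Ai (x + y + u ^ 2) * Real.exp (-(x + y) * u - 2 * u ^ 3 / 3) else 0) with hKdef
  set g : ℝ × ℝ → ENNReal := fun p => (Set.Ioi s₂ ×ˢ Set.Ioi s₁).indicator
      (fun p => ENNReal.ofReal (C * (Real.exp ((1-4*u)*p.1) * Real.exp (-(4*u)*p.2)))) p
    with hgdef
  have hcont : Continuous (fun p : ℝ × ℝ =>
      C * (Real.exp ((1-4*u)*p.1) * Real.exp (-(4*u)*p.2))) := by fun_prop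
  have hgmeas : Measurable g := by
    apply Measurable.indicator _ (measurableSet_Ioi.prod measurableSet_Ioi)
    exact ENNReal.measurable_ofReal.comp hcont.measurable
  have hpt : ∀ p : ℝ × ℝ, ENNReal.ofReal (K p.1 p.2 ^ 2) ≤ g p := by
    intro p
    by_cases hc : s₂ < p.1 ∧ s₁ < p.2
    · have hKval : K p.1 p.2 ^ 2 = Real.exp p.1 * Ai (p.1+p.2+u^2)^2 *
          Real.exp (-2*(p.1+p.2)*u - 4*u^3/3) := by
        rw [hKdef]
        simp only [if_pos hc]
        rw [mul_pow, mul_pow, hexp2, hexp2,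
          show 2*(p.1/2) = p.1 by ring,
          show 2*(-(p.1+p.2)*u - 2*u^3/3) = -2*(p.1+p.2)*u - 4*u^3/3 by ring]
        ring
      have hmem : p ∈ Set.Ioi s₂ ×ˢ Set.Ioi s₁ := ⟨hc.1, hc.2⟩
      rw [hgdef]
      simp only [Set.indicator_of_mem hmem]
      rw [hKval]
      exact ENNReal.ofReal_le_ofReal (pointwise_bound u p.1 p.2 hu)
    · have : K p.1 p.2 = 0 := by
        rw [hKdef]
        simp only [if_neg hc, mul_zero]
      rw [this]
      simpa using zero_le _
  have hplane : (∫⁻ p : ℝ × ℝ, ENNReal.ofReal (K p.1 p.2 ^ 2)) ≤ ENNReal.ofReal R1 := by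
    calc (∫⁻ p : ℝ × ℝ, ENNReal.ofReal (K p.1 p.2 ^ 2)) ≤ ∫⁻ p, g p := lintegral_mono hpt
      _ = ∫⁻ p in Set.Ioi s₂ ×ˢ Set.Ioi s₁,
            ENNReal.ofReal (C * (Real.exp ((1-4*u)*p.1) * Real.exp (-(4*u)*p.2))) := by
          rw [hgdef]
          exact lintegral_indicator (measurableSet_Ioi.prod measurableSet_Ioi) _
      _ = ∫⁻ x in Set.Ioi s₂, ∫⁻ y in Set.Ioi s₁,
            ENNReal.ofReal (C * (Real.exp ((1-4*u)*x) * Real.exp (-(4*u)*y))) := by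
          rw [Measure.volume_eq_prod, ← Measure.prod_restrict]
          exact lintegral_prod _ (ENNReal.measurable_ofReal.comp hcont.measurable).aemeasurable
      _ ≤ ENNReal.ofReal R1 := core_calc s₁ s₂ u hu
  have htoReal : (∫⁻ p : ℝ × ℝ, ENNReal.ofReal (K p.1 p.2 ^ 2)).toReal ≤ R1 :=
    ENNReal.toReal_le_of_le_ofReal hR1 hplane
  calc HSnorm K = Real.sqrt (∫⁻ p : ℝ × ℝ, ENNReal.ofReal (K p.1 p.2 ^ 2)).toReal := rfl
    _ ≤ Real.sqrt R1 := Real.sqrt_le_sqrt htoReal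
    _ = R2 := by rw [← hsq, Real.sqrt_sq hR2]
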